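/- Let k, l : S → ℂ be a solution of the μ-sine subtraction law (E2) such that k and l are linearly independent over ℂ. Then there exist functions φ, ψ : S → ℂ such that l(xσ(y)) = k(x)φ(y) + l(x)ψ(y) for all x, y ∈ S. -/

import Mathlib

/-- If `(k, l)` solves the μ-sine subtraction law and `k, l` are linearly independent over ℂ,
then there are functions `φ, ψ : S → ℂ` with `l(xσ(y)) = k(x)φ(y) + l(x)ψ(y)`. -/
theorem stmt_5 {S : Type*} [Semigroup S]
    (σ : S → S) (hσmul : ∀ x y : S, σ (x * y) = σ x * σ y)
    (hσinv : ∀ x : S, σ (σ x) = x)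
    (μ : S → ℂ) (hμmul : ∀ x y : S, μ (x * y) = μ x * μ y)
    (hμ1 : ∀ x : S, μ (x * σ x) = 1)
    (k l : S → ℂ) (hind : LinearIndependent ℂ ![k, l])
    (hE2 : ∀ x y : S, μ y * k (x * σ y) = k x * l y - k y * l x) :
    ∃ φ ψ : S → ℂ, ∀ x y : S, l (x * σ y) = k x * φ y + l x * ψ y := by
  have hk0 : k ≠ 0 := by simpa using hind.ne_zero 0
  obtain ⟨z0, hz0⟩ : ∃ z, k z ≠ 0 := by
    by_contra h
    push_neg at h
    exact hk0 (funext fun z => h z)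
  have hμne : ∀ y, μ y ≠ 0 := fun y =>
    left_ne_zero_of_mul_eq_one (by rw [← hμmul]; exact hμ1 y)
  refine ⟨fun y => (l y * l z0 - l (y * z0)) / (μ y * k z0),
          fun y => (k (y * z0) - k y * l z0) / (μ y * k z0), fun x y => ?_⟩
  have h1 := hE2 x (y * z0)
  have h2 := hE2 (x * σ y) z0
  have h3 := hE2 x y
  rw [mul_assoc, ← hσmul] at h2
  rw [hμmul] at h1
  have key : μ y * k z0 * l (x * σ y)
      = k x * (l y * l z0 - l (y * z0)) + l x * (k (y * z0) - k y * l z0) := by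
    linear_combination l z0 * h3 + μ y * h2 - h1
  have hne : μ y * k z0 ≠ 0 := mul_ne_zero (hμne y) hz0
  rw [mul_div_assoc', mul_div_assoc', ← add_div, eq_div_iff hne]
  linear_combination key
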